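/- For every positive integer m, there is a surjective group homomorphism from the presented group H_m = ⟨x, y ∣ x^m y x^m = y x^m y, y^m x y^m = x y^m x, (x² y^m)⁴ = 1⟩ onto SL₂(ℤ[1/m]) sending x to [[1,0],[1,1]] and y to [[1,-1/m],[0,1]]. -/

import Mathlib

/-- The subring ℤ[1/m] of ℚ. -/
def Zinv (m : ℕ) : Subring ℚ := Subring.closure {((m : ℚ))⁻¹}

lemma invMem (m : ℕ) : ((m : ℚ))⁻¹ ∈ Zinv m :=
  Subring.subset_closure (Set.mem_singleton _)

def matA (m : ℕ) : Matrix.SpecialLinearGroup (Fin 2) (Zinv m) :=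
  ⟨!![1, 0; 1, 1], by simp [Matrix.det_fin_two_of]⟩

def matQ (m : ℕ) : Matrix.SpecialLinearGroup (Fin 2) (Zinv m) :=
  ⟨!![1, ⟨-((m : ℚ))⁻¹, neg_mem (invMem m)⟩; 0, 1], by simp [Matrix.det_fin_two_of]⟩

def matB (m : ℕ) : Matrix.SpecialLinearGroup (Fin 2) (Zinv m) :=
  ⟨!![0, 1; -1, 0], by simp [Matrix.det_fin_two_of]⟩

def matU (m : ℕ) (hm : 0 < m) : Matrix.SpecialLinearGroup (Fin 2) (Zinv m) :=
  ⟨!![(m : Zinv m), 0; 0, ⟨((m : ℚ))⁻¹, invMem m⟩], by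
    have hm0 : (m : ℚ) ≠ 0 := Nat.cast_ne_zero.2 hm.ne'
    apply Subtype.ext
    simp [Matrix.det_fin_two_of, mul_inv_cancel₀ hm0]⟩

/-- Relators of H_m = ⟨x, y ∣ x^m y x^m = y x^m y, y^m x y^m = x y^m x, (x² y^m)⁴ = 1⟩,
with `0` playing the role of `x` and `1` that of `y`. -/
def Hrels (m : ℕ) : Set (FreeGroup (Fin 2)) :=
  { FreeGroup.of 0 ^ m * FreeGroup.of 1 * FreeGroup.of 0 ^ m *
      (FreeGroup.of 1 * FreeGroup.of 0 ^ m * FreeGroup.of 1)⁻¹,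
    FreeGroup.of 1 ^ m * FreeGroup.of 0 * FreeGroup.of 1 ^ m *
      (FreeGroup.of 0 * FreeGroup.of 1 ^ m * FreeGroup.of 0)⁻¹,
    (FreeGroup.of 0 ^ 2 * FreeGroup.of 1 ^ m) ^ 4 }

namespace S13

lemma myNatAbsEmod (a b : ℤ) (h : b ≠ 0) : (a % b).natAbs < b.natAbs := by
  have h1 := Int.emod_nonneg a h
  have h2 : a % b < |b| := by
    have := Int.emod_lt_of_pos a (abs_pos.mpr h)
    rcases abs_choice b with hb | hb
    · rw [hb]; rwa [hb] at this
    · rw [hb]; rwa [hb, Int.emod_neg] at this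
  rcases abs_choice b with hb | hb <;> omega

variable (m : ℕ)

abbrev SL (m : ℕ) := Matrix.SpecialLinearGroup (Fin 2) (Zinv m)

lemma hm0 (hm : 0 < m) : (m : ℚ) ≠ 0 := Nat.cast_ne_zero.2 hm.ne'

def E12 (t : Zinv m) : SL m := ⟨!![1, t; 0, 1], by simp [Matrix.det_fin_two_of]⟩
def E21 (t : Zinv m) : SL m := ⟨!![1, 0; t, 1], by simp [Matrix.det_fin_two_of]⟩

lemma SL_ext {g h : SL m} (H : ∀ i j, ((g.1 i j : Zinv m) : ℚ) = ((h.1 i j : Zinv m) : ℚ)) :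
    g = h := by
  apply Subtype.ext; ext i j; exact_mod_cast H i j

lemma SL_ext' {g h : SL m} (h00 : ((g.1 0 0 : Zinv m) : ℚ) = ((h.1 0 0 : Zinv m) : ℚ))
    (h01 : ((g.1 0 1 : Zinv m) : ℚ) = ((h.1 0 1 : Zinv m) : ℚ))
    (h10 : ((g.1 1 0 : Zinv m) : ℚ) = ((h.1 1 0 : Zinv m) : ℚ))
    (h11 : ((g.1 1 1 : Zinv m) : ℚ) = ((h.1 1 1 : Zinv m) : ℚ)) : g = h := by
  apply SL_ext
  intro i j
  fin_cases i <;> fin_cases j <;> assumption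

lemma E12_mul (s t : Zinv m) : E12 m s * E12 m t = E12 m (s + t) := by
  apply SL_ext; intro i j
  simp only [Matrix.SpecialLinearGroup.coe_mul]
  fin_cases i <;> fin_cases j <;>
    (simp [E12, Matrix.mul_apply, Fin.sum_univ_succ]; try ring)

lemma E21_mul (s t : Zinv m) : E21 m s * E21 m t = E21 m (s + t) := by
  apply SL_ext; intro i j
  simp only [Matrix.SpecialLinearGroup.coe_mul]
  fin_cases i <;> fin_cases j <;>
    (simp [E21, Matrix.mul_apply, Fin.sum_univ_succ]; try ring)

lemma E12_zero : E12 m 0 = 1 := by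
  apply SL_ext; intro i j
  fin_cases i <;> fin_cases j <;> simp [E12]

lemma E21_zero : E21 m 0 = 1 := by
  apply SL_ext; intro i j
  fin_cases i <;> fin_cases j <;> simp [E21]

lemma E12_inv (t : Zinv m) : (E12 m t)⁻¹ = E12 m (-t) := by
  apply inv_eq_of_mul_eq_one_right
  rw [E12_mul, add_neg_cancel, E12_zero]

lemma E21_inv (t : Zinv m) : (E21 m t)⁻¹ = E21 m (-t) := by
  apply inv_eq_of_mul_eq_one_right
  rw [E21_mul, add_neg_cancel, E21_zero]

lemma E12_pow (t : Zinv m) (n : ℕ) : E12 m t ^ n = E12 m (n * t) := by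
  induction n with
  | zero => simp [E12_zero]
  | succ n ih => rw [pow_succ, ih, E12_mul]; congr 1; push_cast; ring

lemma E21_pow (t : Zinv m) (n : ℕ) : E21 m t ^ n = E21 m (n * t) := by
  induction n with
  | zero => simp [E21_zero]
  | succ n ih => rw [pow_succ, ih, E21_mul]; congr 1; push_cast; ring

lemma E12_zpow (t : Zinv m) (z : ℤ) : E12 m t ^ z = E12 m (z * t) := by
  cases z with
  | ofNat n => rw [Int.ofNat_eq_coe, zpow_natCast, E12_pow]; norm_cast
  | negSucc n =>
      rw [zpow_negSucc, E12_pow, E12_inv]; congr 1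
      push_cast; ring

/-- the entry `-1/m`. -/
def qm : Zinv m := ⟨-((m : ℚ))⁻¹, neg_mem (invMem m)⟩

lemma matA_eq : matA m = E21 m 1 := rfl
lemma matQ_eq : matQ m = E12 m (qm m) := rfl

def Sgrp : Subgroup (SL m) := Subgroup.closure {matA m, matQ m}

lemma matA_mem : matA m ∈ Sgrp m := Subgroup.subset_closure (by simp)
lemma matQ_mem : matQ m ∈ Sgrp m := Subgroup.subset_closure (by simp)

lemma matA_pow (hm : 0 < m) : matA m ^ m = E21 m (m : Zinv m) := by
  rw [matA_eq, E21_pow, mul_one]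

lemma matQ_pow (hm : 0 < m) : matQ m ^ m = E12 m (-1) := by
  rw [matQ_eq, E12_pow]
  congr 1
  apply Subtype.ext
  push_cast [qm]
  rw [mul_neg, mul_inv_cancel₀ (hm0 m hm)]

lemma coe_two : ((2 : Zinv m) : ℚ) = 2 := rfl

def Bmat : SL m := ⟨!![0, -1; 1, 0], by simp [Matrix.det_fin_two_of]⟩
def Nmat : SL m := ⟨!![-1, 0; 0, -1], by simp [Matrix.det_fin_two_of]⟩
def Bmat2 : SL m := ⟨!![0, 1; -1, 0], by simp [Matrix.det_fin_two_of]⟩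
def Xmat : SL m := ⟨!![1, -1; 2, -1], by simp [Matrix.det_fin_two_of]; ring⟩

def wmat (hm : 0 < m) : SL m :=
  ⟨!![0, qm m; (m : Zinv m), 0], by
    apply Subtype.ext
    push_cast [Matrix.det_fin_two_of, qm]
    field_simp
    norm_num⟩

def Umat (hm : 0 < m) : SL m :=
  ⟨!![(m : Zinv m), 0; 0, ⟨((m : ℚ))⁻¹, invMem m⟩], by
    apply Subtype.ext
    simp [Matrix.det_fin_two_of, mul_inv_cancel₀ (hm0 m hm)]⟩

/-- helper simp call for binary products -/
lemma hB1 : Bmat m * E12 m 1 = E12 m (-1) * E21 m 1 := by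
  apply SL_ext; intro i j
  simp only [Matrix.SpecialLinearGroup.coe_mul]
  fin_cases i <;> fin_cases j <;>
    (simp [Bmat, E12, E21, Matrix.mul_apply, Fin.sum_univ_succ]; try ring)

lemma hB2 : Bmat m * E21 m (-1) = E21 m 1 * E12 m (-1) := by
  apply SL_ext; intro i j
  simp only [Matrix.SpecialLinearGroup.coe_mul]
  fin_cases i <;> fin_cases j <;>
    (simp [Bmat, E12, E21, Matrix.mul_apply, Fin.sum_univ_succ]; try ring)

lemma Bmat_eq : Bmat m = E12 m (-1) * E21 m 1 * E12 m (-1) := by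
  have h : Bmat m = (E12 m (-1) * E21 m 1) * (E12 m 1)⁻¹ := by
    rw [← hB1]; group
  rw [h, E12_inv]

lemma Bmat_mem (hm : 0 < m) : Bmat m ∈ Sgrp m := by
  rw [Bmat_eq, ← matQ_pow m hm, ← matA_eq]
  exact mul_mem (mul_mem (pow_mem (matQ_mem m) m) (matA_mem m)) (pow_mem (matQ_mem m) m)

lemma w_eq1 (hm : 0 < m) : wmat m hm * E21 m (-(m : Zinv m)) = E21 m (m : Zinv m) * E12 m (qm m) := by
  apply SL_ext; intro i j
  simp only [Matrix.SpecialLinearGroup.coe_mul]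
  fin_cases i <;> fin_cases j <;>
    (simp [wmat, qm, E12, E21, Matrix.mul_apply, Fin.sum_univ_succ]; try (field_simp; try ring))

lemma w_eq2 (hm : 0 < m) : wmat m hm * E12 m (-(qm m)) = E12 m (qm m) * E21 m (m : Zinv m) := by
  apply SL_ext; intro i j
  simp only [Matrix.SpecialLinearGroup.coe_mul]
  fin_cases i <;> fin_cases j <;>
    (simp [wmat, qm, E12, E21, Matrix.mul_apply, Fin.sum_univ_succ]; try (field_simp; try ring))

lemma w_eq (hm : 0 < m) : E21 m (m : Zinv m) * E12 m (qm m) * E21 m (m : Zinv m) = wmat m hm := by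
  rw [← w_eq1 m hm, mul_assoc, E21_mul, neg_add_cancel, E21_zero, mul_one]

lemma w_eq' (hm : 0 < m) : E12 m (qm m) * E21 m (m : Zinv m) * E12 m (qm m) = wmat m hm := by
  rw [← w_eq2 m hm, mul_assoc, E12_mul, neg_add_cancel, E12_zero, mul_one]

lemma wmat_mem (hm : 0 < m) : wmat m hm ∈ Sgrp m := by
  rw [← w_eq m hm, ← matA_pow m hm, ← matQ_eq]
  exact mul_mem (mul_mem (pow_mem (matA_mem m) m) (matQ_mem m)) (pow_mem (matA_mem m) m)

lemma w_sq (hm : 0 < m) : wmat m hm * wmat m hm = Nmat m := by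
  apply SL_ext; intro i j
  simp only [Matrix.SpecialLinearGroup.coe_mul]
  fin_cases i <;> fin_cases j <;>
    (simp [wmat, Nmat, qm, Matrix.mul_apply, Fin.sum_univ_succ]; try field_simp)

lemma NB_eq : Nmat m * Bmat m = Bmat2 m := by
  apply SL_ext; intro i j
  simp only [Matrix.SpecialLinearGroup.coe_mul]
  fin_cases i <;> fin_cases j <;>
    (simp [Nmat, Bmat, Bmat2, Matrix.mul_apply, Fin.sum_univ_succ]; try ring)

lemma U_eq (hm : 0 < m) : Bmat2 m * wmat m hm = Umat m hm := by
  apply SL_ext; intro i j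
  simp only [Matrix.SpecialLinearGroup.coe_mul]
  fin_cases i <;> fin_cases j <;>
    (simp [Bmat2, wmat, Umat, qm, Matrix.mul_apply, Fin.sum_univ_succ]; try field_simp)

lemma Umat_mem (hm : 0 < m) : Umat m hm ∈ Sgrp m := by
  rw [← U_eq m hm, ← NB_eq, ← w_sq m hm]
  exact mul_mem (mul_mem (mul_mem (wmat_mem m hm) (wmat_mem m hm)) (Bmat_mem m hm))
    (wmat_mem m hm)

lemma U_conj (hm : 0 < m) (t : Zinv m) :
    Umat m hm * E12 m t = E12 m ((m : Zinv m) ^ 2 * t) * Umat m hm := by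
  apply SL_ext; intro i j
  simp only [Matrix.SpecialLinearGroup.coe_mul]
  fin_cases i <;> fin_cases j <;>
    (simp [Umat, E12, Matrix.mul_apply, Fin.sum_univ_succ];
      try (field_simp [hm0 m hm]; try ring))

lemma U_pow_conj (hm : 0 < m) (j : ℕ) (t : Zinv m) :
    Umat m hm ^ j * E12 m t = E12 m ((m : Zinv m) ^ (2 * j) * t) * Umat m hm ^ j := by
  induction j generalizing t with
  | zero => simp
  | succ j ih =>
      rw [pow_succ, mul_assoc, U_conj, ← mul_assoc, ih, mul_assoc, ← pow_succ]
      congr 2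
      ring

lemma rep (hm : 0 < m) (x : ℚ) (hx : x ∈ Zinv m) :
    ∃ (n : ℤ) (k : ℕ), x = n / (m : ℚ) ^ k := by
  have hmQ : (m : ℚ) ≠ 0 := hm0 m hm
  refine Subring.closure_induction ?_ ?_ ?_ ?_ ?_ ?_ hx
  · rintro y hy
    rw [Set.mem_singleton_iff] at hy
    exact ⟨1, 1, by rw [hy]; push_cast; rw [pow_one, one_div]⟩
  · exact ⟨0, 0, by norm_num⟩
  · exact ⟨1, 0, by norm_num⟩
  · rintro x y _ _ ⟨n1, k1, rfl⟩ ⟨n2, k2, rfl⟩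
    refine ⟨n1 * m ^ k2 + n2 * m ^ k1, k1 + k2, ?_⟩
    rw [div_add_div _ _ (pow_ne_zero k1 hmQ) (pow_ne_zero k2 hmQ)]
    push_cast
    rw [pow_add]
    ring_nf
  · rintro x _ ⟨n, k, rfl⟩
    exact ⟨-n, k, by push_cast; ring⟩
  · rintro x y _ _ ⟨n1, k1, rfl⟩ ⟨n2, k2, rfl⟩
    refine ⟨n1 * n2, k1 + k2, ?_⟩
    rw [div_mul_div_comm]
    push_cast
    rw [pow_add]

lemma E12_mem (hm : 0 < m) (t : Zinv m) : E12 m t ∈ Sgrp m := by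
  obtain ⟨n, k, ht⟩ := rep m hm t.1 t.2
  have h1 : E12 m ((m : Zinv m) ^ (2 * k) * t) = matQ m ^ (-n * (m : ℤ) ^ (k + 1)) := by
    rw [matQ_eq, E12_zpow]
    congr 1
    apply Subtype.ext
    push_cast [qm]
    rw [show ((t : ℚ)) = n / (m : ℚ) ^ k from ht]
    field_simp
    ring
  have h2 := U_pow_conj m hm k t
  have h3 : E12 m t = (Umat m hm ^ k)⁻¹ *
      (matQ m ^ (-n * (m : ℤ) ^ (k + 1)) * Umat m hm ^ k) := by
    rw [← h1, ← h2]; group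
  rw [h3]
  exact mul_mem (inv_mem (pow_mem (Umat_mem m hm) k))
    (mul_mem (zpow_mem (matQ_mem m) _) (pow_mem (Umat_mem m hm) k))

lemma BE_eq (t : Zinv m) : E21 m t * Bmat m = Bmat m * E12 m (-t) := by
  apply SL_ext; intro i j
  simp only [Matrix.SpecialLinearGroup.coe_mul]
  fin_cases i <;> fin_cases j <;>
    (simp [Bmat, E12, E21, Matrix.mul_apply, Fin.sum_univ_succ]; try ring)

lemma E21_mem (hm : 0 < m) (t : Zinv m) : E21 m t ∈ Sgrp m := by
  have h : E21 m t = Bmat m * E12 m (-t) * (Bmat m)⁻¹ := by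
    rw [← BE_eq]; group
  rw [h]
  exact mul_mem (mul_mem (Bmat_mem m hm) (E12_mem m hm _)) (inv_mem (Bmat_mem m hm))

/- entry lemmas -/
lemma E12_mul_00 (s : Zinv m) (g : SL m) :
    (E12 m s * g).1 0 0 = g.1 0 0 + s * g.1 1 0 := by
  simp only [Matrix.SpecialLinearGroup.coe_mul]
  simp [E12, Matrix.mul_apply, Fin.sum_univ_succ]

lemma E12_mul_10 (s : Zinv m) (g : SL m) : (E12 m s * g).1 1 0 = g.1 1 0 := by
  simp only [Matrix.SpecialLinearGroup.coe_mul]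
  simp [E12, Matrix.mul_apply, Fin.sum_univ_succ]

lemma E21_mul_00 (s : Zinv m) (g : SL m) : (E21 m s * g).1 0 0 = g.1 0 0 := by
  simp only [Matrix.SpecialLinearGroup.coe_mul]
  simp [E21, Matrix.mul_apply, Fin.sum_univ_succ]

lemma E21_mul_10 (s : Zinv m) (g : SL m) :
    (E21 m s * g).1 1 0 = s * g.1 0 0 + g.1 1 0 := by
  simp only [Matrix.SpecialLinearGroup.coe_mul]
  simp [E21, Matrix.mul_apply, Fin.sum_univ_succ]

lemma Bmat_mul_00 (g : SL m) : (Bmat m * g).1 0 0 = -(g.1 1 0) := by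
  simp only [Matrix.SpecialLinearGroup.coe_mul]
  simp [Bmat, Matrix.mul_apply, Fin.sum_univ_succ]

lemma Bmat_mul_10 (g : SL m) : (Bmat m * g).1 1 0 = g.1 0 0 := by
  simp only [Matrix.SpecialLinearGroup.coe_mul]
  simp [Bmat, Matrix.mul_apply, Fin.sum_univ_succ]

lemma det_entries (g : SL m) : g.1 0 0 * g.1 1 1 - g.1 0 1 * g.1 1 0 = 1 := by
  have h := g.2
  rwa [Matrix.det_fin_two] at h

lemma upper_unipotent (g : SL m) (h00 : g.1 0 0 = 1) (h10 : g.1 1 0 = 0) :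
    g = E12 m (g.1 0 1) := by
  have hd := det_entries m g
  rw [h00, h10, one_mul, mul_zero, sub_zero] at hd
  apply SL_ext'
  · rw [h00]; simp [E12]
  · simp [E12]
  · rw [h10]; simp [E12]
  · rw [hd]; simp [E12]

lemma upper_mem (hm : 0 < m) (g : SL m) (h10 : g.1 1 0 = 0) : g ∈ Sgrp m := by
  have hd := det_entries m g
  rw [h10, mul_zero, sub_zero] at hd
  set α := g.1 0 0 with hα
  set δ := g.1 1 1 with hδ
  set h : SL m := E21 m (-1) * (E12 m (1 - α) * (E21 m δ * g)) with hh
  have h00 : h.1 0 0 = 1 := by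
    rw [hh, E21_mul_00, E12_mul_00, E21_mul_00, E21_mul_10, h10]
    linear_combination (1 - α) * hd
  have h10' : h.1 1 0 = 0 := by
    rw [hh, E21_mul_10, E12_mul_00, E12_mul_10, E21_mul_00, E21_mul_10, h10]
    linear_combination α * hd
  have hE := upper_unipotent m h h00 h10'
  have hg : g = (E21 m δ)⁻¹ * ((E12 m (1 - α))⁻¹ * ((E21 m (-1))⁻¹ * E12 m (h.1 0 1))) := by
    rw [← hE, hh]; group
  rw [hg, E21_inv, E12_inv, E21_inv]
  exact mul_mem (E21_mem m hm _) (mul_mem (E12_mem m hm _)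
    (mul_mem (E21_mem m hm _) (E12_mem m hm _)))

lemma zero_entry (g : SL m) (h : ((g.1 1 0 : Zinv m) : ℚ) = 0) : g.1 1 0 = 0 :=
  Subtype.ext h

lemma reduce (hm : 0 < m) (N : ℕ) : ∀ (g : SL m) (a c : ℤ) (k : ℕ),
    ((g.1 0 0 : Zinv m) : ℚ) = a / (m : ℚ) ^ k →
    ((g.1 1 0 : Zinv m) : ℚ) = c / (m : ℚ) ^ k →
    c.natAbs ≤ N → g ∈ Sgrp m := by
  have hmQ : (m : ℚ) ≠ 0 := hm0 m hm
  induction N with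
  | zero =>
      intro g a c k ha hc hcN
      have hc0 : c = 0 := by omega
      apply upper_mem m hm
      apply zero_entry
      rw [hc, hc0]
      simp
  | succ N ih =>
      intro g a c k ha hc hcN
      by_cases hc0 : c = 0
      · apply upper_mem m hm
        apply zero_entry
        rw [hc, hc0]
        simp
      · set q : ℤ := a / c with hq
        set r : ℤ := a % c with hr
        have hmod : (c : ℚ) * q + r = a := by exact_mod_cast congrArg Int.cast (Int.mul_ediv_add_emod a c)
        set s : Zinv m := -(q : Zinv m) with hs
        set g' : SL m := Bmat m * (E12 m s * g) with hg'
        have h00 : ((g'.1 0 0 : Zinv m) : ℚ) = (-c : ℤ) / (m : ℚ) ^ k := by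
          rw [hg', Bmat_mul_00, E12_mul_10]
          push_cast [hc]
          ring
        have h10 : ((g'.1 1 0 : Zinv m) : ℚ) = (r : ℤ) / (m : ℚ) ^ k := by
          rw [hg', Bmat_mul_10, E12_mul_00]
          have hra : (r : ℚ) = a - c * q := by linarith
          push_cast [ha, hc, hs, hra]
          ring
        have hrN : r.natAbs ≤ N := by
          have := myNatAbsEmod a c hc0
          omega
        have hg'mem : g' ∈ Sgrp m := ih g' (-c) r k h00 h10 hrN
        have hgeq : g = (E12 m s)⁻¹ * ((Bmat m)⁻¹ * g') := by
          rw [hg']; group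
        rw [hgeq, E12_inv]
        exact mul_mem (E12_mem m hm _) (mul_mem (inv_mem (Bmat_mem m hm)) hg'mem)

lemma Sgrp_top (hm : 0 < m) (g : SL m) : g ∈ Sgrp m := by
  have hmQ : (m : ℚ) ≠ 0 := hm0 m hm
  obtain ⟨n1, k1, h1⟩ := rep m hm (g.1 0 0 : Zinv m) (g.1 0 0).2
  obtain ⟨n2, k2, h2⟩ := rep m hm (g.1 1 0 : Zinv m) (g.1 1 0).2
  refine reduce m hm (n2 * (m : ℤ) ^ k1).natAbs g (n1 * (m : ℤ) ^ k2) (n2 * (m : ℤ) ^ k1)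
    (k1 + k2) ?_ ?_ le_rfl
  · rw [h1]; field_simp; push_cast; ring
  · rw [h2]; field_simp; push_cast; ring

lemma X_eq : E21 m ((2 : ℕ) : Zinv m) * E12 m (-1) = Xmat m := by
  apply SL_ext; intro i j
  simp only [Matrix.SpecialLinearGroup.coe_mul]
  fin_cases i <;> fin_cases j <;>
    (simp [Xmat, E12, E21, coe_two, Matrix.mul_apply, Fin.sum_univ_succ]; try push_cast; try ring)

lemma X_sq : Xmat m * Xmat m = Nmat m := by
  apply SL_ext; intro i j
  simp only [Matrix.SpecialLinearGroup.coe_mul]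
  fin_cases i <;> fin_cases j <;>
    (simp [Xmat, Nmat, coe_two, Matrix.mul_apply, Fin.sum_univ_succ]; try ring)

lemma N_sq : Nmat m * Nmat m = 1 := by
  apply SL_ext; intro i j
  simp only [Matrix.SpecialLinearGroup.coe_mul]
  fin_cases i <;> fin_cases j <;>
    (simp [Nmat, Matrix.mul_apply, Fin.sum_univ_succ, Matrix.one_apply]; try ring)

lemma matA_sq : matA m ^ 2 = E21 m ((2 : ℕ) : Zinv m) := by
  rw [matA_eq, E21_pow, mul_one]

end S13

theorem stmt_13 (m : ℕ) (hm : 0 < m) :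
    ∃ φ : PresentedGroup (Hrels m) →* Matrix.SpecialLinearGroup (Fin 2) (Zinv m),
      Function.Surjective φ ∧
      φ (PresentedGroup.of 0) = matA m ∧
      φ (PresentedGroup.of 1) = matQ m := by
  classical
  set f : Fin 2 → S13.SL m := ![matA m, matQ m] with hf
  have hf0 : f 0 = matA m := rfl
  have hf1 : f 1 = matQ m := rfl
  have hrels : ∀ r ∈ Hrels m, FreeGroup.lift f r = 1 := by
    intro r hr
    simp only [Hrels, Set.mem_insert_iff, Set.mem_singleton_iff] at hr
    rcases hr with rfl | rfl | rfl
    · simp only [map_mul, map_pow, map_inv, FreeGroup.lift_apply_of, hf0, hf1]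
      rw [mul_inv_eq_one]
      rw [S13.matA_pow m hm, S13.matQ_eq]
      rw [S13.w_eq m hm, S13.w_eq' m hm]
    · simp only [map_mul, map_pow, map_inv, FreeGroup.lift_apply_of, hf0, hf1]
      rw [mul_inv_eq_one]
      rw [S13.matQ_pow m hm, S13.matA_eq]
      rw [← S13.Bmat_eq]
      have h2 : S13.E21 m 1 * S13.E12 m (-1) * S13.E21 m 1 = S13.Bmat m := by
        rw [← S13.hB2, mul_assoc, S13.E21_mul, neg_add_cancel, S13.E21_zero, mul_one]
      rw [h2]
    · simp only [map_mul, map_pow, map_inv, FreeGroup.lift_apply_of, hf0, hf1]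
      rw [S13.matA_sq m, S13.matQ_pow m hm, S13.X_eq m]
      have h4 : S13.Xmat m ^ 4 = S13.Xmat m ^ 2 * S13.Xmat m ^ 2 := by
        rw [← pow_add]
      rw [h4, pow_two, S13.X_sq, S13.N_sq]
  refine ⟨PresentedGroup.toGroup hrels, ?_, ?_, ?_⟩
  · intro g
    have hle : S13.Sgrp m ≤ (PresentedGroup.toGroup hrels).range := by
      rw [S13.Sgrp, Subgroup.closure_le]
      rintro x hx
      rcases hx with rfl | rfl
      · exact ⟨PresentedGroup.of 0, by rw [PresentedGroup.toGroup.of]; exact hf0⟩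
      · exact ⟨PresentedGroup.of 1, by rw [PresentedGroup.toGroup.of]; exact hf1⟩
    exact hle (S13.Sgrp_top m hm g)
  · rw [PresentedGroup.toGroup.of]; exact hf0
  · rw [PresentedGroup.toGroup.of]; exact hf1
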